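/- Let $\mathfrak{a} \subseteq K[x_1,\dots,x_n]$ be a zero-dimensional monomial ideal (i.e., the quotient $K[x_1,\dots,x_n]/\mathfrak{a}$ is finite-dimensional over $K$, and the scheme defined by $\mathfrak{a}$ is supported at the origin). Suppose $a_1,\dots,a_n$ are positive reals such that every monomial $x_1^{u_1}\cdots x_n^{u_n} \in \mathfrak{a}$ satisfies $\sum_{i=1}^n u_i/a_i \ge 1$. Then $n! \cdot \dim_K(K[x_1,\dots,x_n]/\mathfrak{a}) \ge \prod_{i=1}^n a_i$. -/

import Mathlib

open MvPolynomial Finset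

noncomputable def Tset (n : ℕ) (a : Fin n → ℝ) : Finset (Fin n → ℕ) :=
  (Fintype.piFinset fun i => Finset.range ⌈a i⌉₊).filter fun u => ∑ i, (u i : ℝ) / a i < 1

lemma mem_Tset {n : ℕ} {a : Fin n → ℝ} (ha : ∀ i, 0 < a i) (u : Fin n → ℕ) :
    u ∈ Tset n a ↔ ∑ i, (u i : ℝ) / a i < 1 := by
  constructor
  · intro h; exact (Finset.mem_filter.mp h).2
  · intro h
    refine Finset.mem_filter.mpr ⟨Fintype.mem_piFinset.mpr fun i => ?_, h⟩
    rw [Finset.mem_range, Nat.lt_ceil]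
    have h1 : (u i : ℝ) / a i < 1 := by
      refine lt_of_le_of_lt ?_ h
      exact Finset.single_le_sum (f := fun j => (u j : ℝ) / a j)
        (fun j _ => div_nonneg (Nat.cast_nonneg _) (ha j).le) (Finset.mem_univ i)
    exact (div_lt_one (ha i)).mp h1

lemma pow_sub_pow_le' {x y : ℝ} (hy : 0 ≤ y) (hxy : y ≤ x) (m : ℕ) :
    x ^ (m + 1) - y ^ (m + 1) ≤ (m + 1) * x ^ m * (x - y) := by
  induction m with
  | zero => simp
  | succ m ih =>
    have hx : 0 ≤ x := hy.trans hxy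
    have h3 : y ^ (m+1) * (x - y) ≤ x ^ (m+1) * (x - y) :=
      mul_le_mul_of_nonneg_right (pow_le_pow_left₀ hy hxy _) (by linarith)
    have h2 : x * (x ^ (m+1) - y ^ (m+1)) ≤ x * (((m:ℝ) + 1) * x ^ m * (x - y)) := by
      apply mul_le_mul_of_nonneg_left _ hx
      push_cast at ih; exact ih
    have e1 : x ^ (m+2) - y ^ (m+2) = x * (x ^ (m+1) - y ^ (m+1)) + y ^ (m+1) * (x - y) := by
      ring
    have e2 : x * (((m:ℝ) + 1) * x ^ m * (x - y)) = ((m:ℝ)+1) * x ^ (m+1) * (x - y) := by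
      ring
    push_cast
    rw [show m + 1 + 1 = m + 2 from rfl, e1]
    rw [e2] at h2
    nlinarith [h2, h3]

lemma lemC (a : ℝ) (ha : 0 < a) (N : ℕ) :
    a ≤ (N + 1) * ∑ k ∈ Finset.range ⌈a⌉₊, (1 - (k:ℝ) / a) ^ N := by
  set x : ℕ → ℝ := fun k => max (1 - (k:ℝ) / a) 0 with hxdef
  have key : ∀ k ∈ Finset.range ⌈a⌉₊,
      x k ^ (N + 1) - x (k + 1) ^ (N + 1) ≤ ((N:ℝ) + 1) * (1 - (k:ℝ) / a) ^ N * (1 / a) := by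
    intro k hk
    rw [Finset.mem_range, Nat.lt_ceil] at hk
    have hxk : x k = 1 - (k:ℝ) / a := by
      simp only [hxdef]
      exact max_eq_left (by rw [sub_nonneg]; exact ((div_le_one ha).mpr hk.le))
    have h0 : (0:ℝ) ≤ x (k+1) := le_max_right _ _
    have h1 : x (k + 1) ≤ x k := by
      apply max_le_max _ le_rfl
      have hdiv : (k:ℝ)/a ≤ ((k+1:ℕ):ℝ)/a := by
        gcongr
        push_cast; linarith
      linarith
    have h2 : x k - x (k + 1) ≤ 1 / a := by
      have hl : 1 - ((k+1:ℕ):ℝ) / a ≤ x (k+1) := le_max_left _ _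
      rw [hxk]
      push_cast at hl ⊢
      have : ((k:ℝ)+1)/a = (k:ℝ)/a + 1/a := by ring
      linarith [this ▸ hl]
    calc x k ^ (N + 1) - x (k + 1) ^ (N + 1)
        ≤ ((N:ℝ) + 1) * x k ^ N * (x k - x (k + 1)) := by
          have := pow_sub_pow_le' h0 h1 N
          push_cast at this; exact this
      _ ≤ ((N:ℝ) + 1) * (1 - (k:ℝ) / a) ^ N * (x k - x (k+1)) := by rw [hxk]
      _ ≤ ((N:ℝ) + 1) * (1 - (k:ℝ) / a) ^ N * (1 / a) := by
          apply mul_le_mul_of_nonneg_left h2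
          rw [← hxk]
          positivity
  have htel : ∑ k ∈ Finset.range ⌈a⌉₊, (x k ^ (N+1) - x (k+1) ^ (N+1))
      = x 0 ^ (N+1) - x ⌈a⌉₊ ^ (N+1) := by
    exact Finset.sum_range_sub' (fun k => x k ^ (N+1)) _
  have hx0 : x 0 = 1 := by simp [hxdef]
  have hxm : x ⌈a⌉₊ = 0 := by
    simp only [hxdef]
    apply max_eq_right
    rw [sub_nonpos]
    exact (one_le_div ha).mpr (Nat.le_ceil a)
  have hsum := Finset.sum_le_sum key
  rw [htel, hx0, hxm] at hsum
  simp only [one_pow, zero_pow (Nat.succ_ne_zero N)] at hsum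
  have : ∑ k ∈ Finset.range ⌈a⌉₊, ((N:ℝ) + 1) * (1 - (k:ℝ) / a) ^ N * (1 / a)
      = ((N:ℝ) + 1) * (∑ k ∈ Finset.range ⌈a⌉₊, (1 - (k:ℝ) / a) ^ N) * (1/a) := by
    rw [Finset.mul_sum, Finset.sum_mul]
  rw [this] at hsum
  have := mul_le_mul_of_nonneg_right hsum ha.le
  rw [sub_zero] at this
  calc a = 1 * a := (one_mul a).symm
    _ ≤ ((N:ℝ) + 1) * (∑ k ∈ Finset.range ⌈a⌉₊, (1 - (k:ℝ) / a) ^ N) * (1/a) * a := this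
    _ = ((N:ℝ) + 1) * (∑ k ∈ Finset.range ⌈a⌉₊, (1 - (k:ℝ) / a) ^ N) := by
        field_simp


lemma lemB : ∀ (n : ℕ) (a : Fin n → ℝ), (∀ i, 0 < a i) →
    ∏ i, a i ≤ (Nat.factorial n : ℝ) * ((Tset n a).card : ℝ) := by
  intro n
  induction n with
  | zero =>
    intro a ha
    have : (default : Fin 0 → ℕ) ∈ Tset 0 a := by
      rw [mem_Tset ha]
      simp
    have hc : 1 ≤ (Tset 0 a).card := Finset.card_pos.mpr ⟨_, this⟩
    simp only [Finset.univ_eq_empty, Finset.prod_empty, Nat.factorial_zero, Nat.cast_one, one_mul]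
    exact_mod_cast hc
  | succ n ih =>
    intro a ha
    set m := ⌈a 0⌉₊ with hm
    set b : ℕ → Fin n → ℝ := fun k i => a i.succ * (1 - (k:ℝ) / a 0) with hb
    have hbpos : ∀ k ∈ Finset.range m, ∀ i, 0 < b k i := by
      intro k hk i
      rw [Finset.mem_range, Nat.lt_ceil] at hk
      have hc : 0 < 1 - (k:ℝ) / a 0 := by
        rw [sub_pos]; exact (div_lt_one (ha 0)).mpr hk
      exact mul_pos (ha i.succ) hc
    -- injection from sigma into Tset (n+1) a
    have hcard : ∑ k ∈ Finset.range m, ((Tset n (b k)).card : ℝ) ≤ ((Tset (n+1) a).card : ℝ) := by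
      have : ((Finset.range m).sigma fun k => Tset n (b k)).card ≤ (Tset (n+1) a).card := by
        apply Finset.card_le_card_of_injOn (fun p => Fin.cons p.1 p.2)
        · intro p hp
          rw [Finset.mem_coe, Finset.mem_sigma] at hp; rw [Finset.mem_coe]
          obtain ⟨hk, hu⟩ := hp
          have hk' : (p.1 : ℝ) < a 0 := by
            rw [Finset.mem_range, Nat.lt_ceil] at hk; exact hk
          have hc : 0 < 1 - (p.1:ℝ) / a 0 := by
            rw [sub_pos]; exact (div_lt_one (ha 0)).mpr hk'
          rw [mem_Tset (fun i => hbpos p.1 hk i)] at hu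
          rw [mem_Tset ha]
          rw [Fin.sum_univ_succ]
          simp only [Fin.cons_zero, Fin.cons_succ]
          have hrw : ∀ i : Fin n, ((p.2 i : ℝ)) / b p.1 i = ((p.2 i : ℝ) / a i.succ) / (1 - (p.1:ℝ)/a 0) := by
            intro i; rw [hb]; rw [div_div]
          rw [Finset.sum_congr rfl (fun i _ => hrw i)] at hu
          rw [← Finset.sum_div] at hu
          have := (div_lt_one hc).mp hu
          linarith
        · intro p hp q hq hpq
          have h1 : p.1 = q.1 := by
            have := congrFun hpq 0
            simpa using this
          have h2 : p.2 = q.2 := by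
            funext i
            have := congrFun hpq i.succ
            simpa using this
          exact Sigma.ext h1 (heq_of_eq h2)
      calc ∑ k ∈ Finset.range m, ((Tset n (b k)).card : ℝ)
          = (((Finset.range m).sigma fun k => Tset n (b k)).card : ℝ) := by
            rw [Finset.card_sigma]; push_cast; ring
        _ ≤ _ := by exact_mod_cast this
    -- chain
    have hIH : ∀ k ∈ Finset.range m,
        (∏ i : Fin n, a i.succ) * (1 - (k:ℝ)/a 0) ^ n ≤ (Nat.factorial n : ℝ) * ((Tset n (b k)).card : ℝ) := by
      intro k hk
      have := ih (b k) (hbpos k hk)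
      calc (∏ i : Fin n, a i.succ) * (1 - (k:ℝ)/a 0) ^ n
          = ∏ i, b k i := by
            rw [hb]; rw [Finset.prod_mul_distrib, Finset.prod_const]
            simp
        _ ≤ _ := this
    have hfacpos : (0:ℝ) < Nat.factorial n := by positivity
    have hprodpos : (0:ℝ) < ∏ i : Fin n, a i.succ := Finset.prod_pos fun (i : Fin n) _ => ha i.succ
    have step1 : ∏ i : Fin (n+1), a i ≤ ((n:ℝ)+1) * ∑ k ∈ Finset.range m, (∏ i : Fin n, a i.succ) * (1 - (k:ℝ)/a 0) ^ n := by
      rw [Fin.prod_univ_succ]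
      have := lemC (a 0) (ha 0) n
      rw [← Finset.mul_sum]
      calc a 0 * ∏ i : Fin n, a i.succ
          ≤ (((n:ℝ) + 1) * ∑ k ∈ Finset.range m, (1 - (k:ℝ) / a 0) ^ n) * ∏ i : Fin n, a i.succ :=
            mul_le_mul_of_nonneg_right this hprodpos.le
        _ = ((n:ℝ)+1) * ((∏ i : Fin n, a i.succ) * ∑ k ∈ Finset.range m, (1 - (k:ℝ) / a 0) ^ n) := by ring
    have step2 : ∑ k ∈ Finset.range m, (∏ i : Fin n, a i.succ) * (1 - (k:ℝ)/a 0) ^ n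
        ≤ ∑ k ∈ Finset.range m, (Nat.factorial n : ℝ) * ((Tset n (b k)).card : ℝ) :=
      Finset.sum_le_sum hIH
    calc ∏ i : Fin (n+1), a i
        ≤ ((n:ℝ)+1) * ∑ k ∈ Finset.range m, (∏ i : Fin n, a i.succ) * (1 - (k:ℝ)/a 0) ^ n := step1
      _ ≤ ((n:ℝ)+1) * ∑ k ∈ Finset.range m, (Nat.factorial n : ℝ) * ((Tset n (b k)).card : ℝ) := by
          apply mul_le_mul_of_nonneg_left step2; positivity
      _ = ((n:ℝ)+1) * ((Nat.factorial n : ℝ) * ∑ k ∈ Finset.range m, ((Tset n (b k)).card : ℝ)) := by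
          simp [Finset.mul_sum, mul_assoc]
      _ ≤ ((n:ℝ)+1) * ((Nat.factorial n : ℝ) * ((Tset (n+1) a).card : ℝ)) := by
          apply mul_le_mul_of_nonneg_left _ (by positivity)
          exact mul_le_mul_of_nonneg_left hcard hfacpos.le
      _ = (Nat.factorial (n+1) : ℝ) * ((Tset (n+1) a).card : ℝ) := by
          rw [Nat.factorial_succ]; push_cast; ring


/-- Lemma 1.3 of de Fernex–Ein–Mustață: if `𝔞` is a zero-dimensional monomial
ideal and every monomial `x^u ∈ 𝔞` satisfies `∑ uᵢ/aᵢ ≥ 1`, then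
`n! · dim_K K[x]/𝔞 ≥ ∏ aᵢ`. -/
theorem stmt1 (K : Type*) [Field K] (n : ℕ) (hn : 1 ≤ n)
    (I : Ideal (MvPolynomial (Fin n) K))
    (hmono : ∀ f ∈ I, ∀ u ∈ f.support, (monomial u (1 : K)) ∈ I)
    (hfin : FiniteDimensional K (MvPolynomial (Fin n) K ⧸ I))
    (hI : I ≠ ⊤)
    (a : Fin n → ℝ) (ha : ∀ i, 0 < a i)
    (hNewton : ∀ u : Fin n →₀ ℕ, (monomial u (1 : K)) ∈ I →
      1 ≤ ∑ i, (u i : ℝ) / a i) :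
    ∏ i, a i ≤
      (Nat.factorial n : ℝ) * (Module.finrank K (MvPolynomial (Fin n) K ⧸ I) : ℝ) := by
  set e : (Fin n → ℕ) → (Fin n →₀ ℕ) := fun u => Finsupp.equivFunOnFinite.symm u with he
  have heinj : Function.Injective e := Finsupp.equivFunOnFinite.symm.injective
  have heapp : ∀ u i, e u i = u i := fun u i => rfl
  -- monomials in Tset are not in I
  have hnotI : ∀ u ∈ Tset n a, (monomial (e u) (1 : K)) ∉ I := by
    intro u hu hmem
    have h1 := hNewton (e u) hmem
    rw [mem_Tset ha] at hu
    have : ∑ i, ((e u) i : ℝ) / a i = ∑ i, (u i : ℝ) / a i :=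
      Finset.sum_congr rfl fun i _ => by rw [heapp]
    rw [this] at h1
    linarith
  -- linear independence of residues
  have hli : LinearIndependent K
      (fun u : (Tset n a : Finset (Fin n → ℕ)) =>
        Ideal.Quotient.mkₐ K I (monomial (e u.1) (1 : K))) := by
    rw [linearIndependent_iff']
    intro s g hsum i hi
    by_contra hgi
    set p : MvPolynomial (Fin n) K := ∑ j ∈ s, g j • monomial (e j.1) (1 : K) with hp
    have hpI : p ∈ I := by
      have hz : Ideal.Quotient.mkₐ K I p = 0 := by
        rw [hp, map_sum]
        simp only [map_smul]
        exact hsum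
      rw [Ideal.Quotient.mkₐ_eq_mk] at hz
      exact Ideal.Quotient.eq_zero_iff_mem.mp hz
    have hcoeff : coeff (e i.1) p = g i := by
      rw [hp, MvPolynomial.coeff_sum]
      have : ∀ j ∈ s, coeff (e i.1) (g j • monomial (e j.1) (1:K))
          = if j = i then g j else 0 := by
        intro j _
        rw [MvPolynomial.coeff_smul, MvPolynomial.coeff_monomial]
        by_cases h : j = i
        · simp [h]
        · have : e j.1 ≠ e i.1 := fun hh => h (Subtype.ext (heinj hh))
          simp [this, h]
      rw [Finset.sum_congr rfl this, Finset.sum_ite_eq' s i (fun j => g j), if_pos hi]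
    have hsupp : e i.1 ∈ p.support := by
      rw [MvPolynomial.mem_support_iff, hcoeff]; exact hgi
    exact hnotI i.1 i.2 (hmono p hpI (e i.1) hsupp)
  have hcard : ((Tset n a).card : ℝ) ≤ (Module.finrank K (MvPolynomial (Fin n) K ⧸ I) : ℝ) := by
    have := hli.fintype_card_le_finrank
    rw [Fintype.card_coe] at this
    exact_mod_cast this
  calc ∏ i, a i ≤ (Nat.factorial n : ℝ) * ((Tset n a).card : ℝ) := lemB n a ha
    _ ≤ _ := by
        apply mul_le_mul_of_nonneg_left hcard
        positivity
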